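/- The function F(h) = ∑_{(n₁,n₂)∈ℤ²} e^{−2h²(n₁²+n₂²)} A_h(n₁,n₂), with A_h(n₁,n₂) = 1 − 16h²n₁² + 24h⁴n₁⁴ + 24h⁴n₁²n₂² − (32/3)h⁶n₁⁶ − 32h⁶n₁⁴n₂² + (128/3)h⁸n₁⁶n₂² − (128/3)h⁸n₁⁴n₂⁴, is differentiable on (0,∞) and its derivative satisfies F'(h) = q₂(h) for every h > 0. -/

import Mathlib

open MeasureTheory

/-- The polynomial `A_h(n₁,n₂)`. -/
noncomputable def Apoly (h : ℝ) (n₁ n₂ : ℤ) : ℝ :=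
  1 - 16 * h ^ 2 * (n₁ : ℝ) ^ 2 + 24 * h ^ 4 * (n₁ : ℝ) ^ 4
    + 24 * h ^ 4 * (n₁ : ℝ) ^ 2 * (n₂ : ℝ) ^ 2
    - (32 / 3) * h ^ 6 * (n₁ : ℝ) ^ 6 - 32 * h ^ 6 * (n₁ : ℝ) ^ 4 * (n₂ : ℝ) ^ 2
    + (128 / 3) * h ^ 8 * (n₁ : ℝ) ^ 6 * (n₂ : ℝ) ^ 2
    - (128 / 3) * h ^ 8 * (n₁ : ℝ) ^ 4 * (n₂ : ℝ) ^ 4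

/-- The polynomial `B_h(n₁,n₂)`. -/
noncomputable def Bpoly (h : ℝ) (n₁ n₂ : ℤ) : ℝ :=
  (8 / 3) * h * (-15 * (n₁ : ℝ) ^ 2 + 60 * h ^ 2 * (n₁ : ℝ) ^ 4
    + 60 * h ^ 2 * (n₁ : ℝ) ^ 2 * (n₂ : ℝ) ^ 2
    - 60 * h ^ 4 * (n₁ : ℝ) ^ 6 - 180 * h ^ 4 * (n₁ : ℝ) ^ 4 * (n₂ : ℝ) ^ 2
    + 16 * h ^ 6 * (n₁ : ℝ) ^ 8 + 192 * h ^ 6 * (n₁ : ℝ) ^ 6 * (n₂ : ℝ) ^ 2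
    - 80 * h ^ 6 * (n₁ : ℝ) ^ 4 * (n₂ : ℝ) ^ 4
    - 64 * h ^ 8 * (n₁ : ℝ) ^ 8 * (n₂ : ℝ) ^ 2
    + 64 * h ^ 8 * (n₁ : ℝ) ^ 6 * (n₂ : ℝ) ^ 4)

/-- The distribution function `F(h) = ∑_{(n₁,n₂)∈ℤ²} e^{-2h²(n₁²+n₂²)} A_h(n₁,n₂)`. -/
noncomputable def Fdist (h : ℝ) : ℝ :=
  ∑' n : ℤ × ℤ, Real.exp (-2 * h ^ 2 * ((n.1 : ℝ) ^ 2 + (n.2 : ℝ) ^ 2)) * Apoly h n.1 n.2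

/-- The density `q₂(h) = ∑_{(n₁,n₂)∈ℤ²∖{(0,0)}} e^{-2h²(n₁²+n₂²)} B_h(n₁,n₂)`. -/
noncomputable def qTwo (h : ℝ) : ℝ :=
  ∑' n : {p : ℤ × ℤ // p ≠ (0, 0)},
    Real.exp (-2 * h ^ 2 * ((n.1.1 : ℝ) ^ 2 + (n.1.2 : ℝ) ^ 2)) * Bpoly h n.1.1 n.1.2

/-- An antisymmetric correction polynomial. -/
noncomputable def Epoly (h : ℝ) (n₁ n₂ : ℤ) : ℝ :=
  4 * h * (n₁ : ℝ) ^ 2 - 4 * h * (n₂ : ℝ) ^ 2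
    + 96 * h ^ 5 * (n₁ : ℝ) ^ 4 * (n₂ : ℝ) ^ 2
    - 96 * h ^ 5 * (n₁ : ℝ) ^ 2 * (n₂ : ℝ) ^ 4
    + (512 / 3) * h ^ 9 * (n₁ : ℝ) ^ 4 * (n₂ : ℝ) ^ 6
    - (512 / 3) * h ^ 9 * (n₁ : ℝ) ^ 6 * (n₂ : ℝ) ^ 4

/-- The termwise derivative polynomial. -/
noncomputable def Dpoly (h : ℝ) (n₁ n₂ : ℤ) : ℝ := Bpoly h n₁ n₂ + Epoly h n₁ n₂

set_option maxHeartbeats 1000000 in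
lemma sum1 {c : ℝ} (hc : 0 < c) :
    Summable fun n : ℤ => (1 + (n : ℝ) ^ 2) ^ 5 * Real.exp (-c * (n : ℝ) ^ 2) := by
  obtain ⟨r, hr⟩ : ∃ r, r = Real.exp (-c) := ⟨_, rfl⟩
  have hr0 : 0 < r := hr ▸ Real.exp_pos _
  have hr1 : r < 1 := by rw [hr, Real.exp_lt_one_iff]; linarith
  have base : Summable fun n : ℕ => (n : ℝ) ^ 10 * r ^ n :=
    summable_pow_mul_geometric_of_norm_lt_one 10
      (by rw [Real.norm_eq_abs, abs_of_pos hr0]; exact hr1)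
  have shift : Summable fun n : ℕ => ((n + 1 : ℕ) : ℝ) ^ 10 * r ^ (n + 1) :=
    (summable_nat_add_iff 1).2 base
  have h2 : Summable fun n : ℕ => ((n : ℝ) + 1) ^ 10 * r ^ n := by
    refine (shift.mul_left r⁻¹).congr fun n => ?_
    push_cast
    rw [pow_succ]
    field_simp
    ring
  have hnat : Summable fun n : ℕ => (1 + (n : ℝ) ^ 2) ^ 5 * Real.exp (-c * (n : ℝ) ^ 2) := by
    refine Summable.of_nonneg_of_le (fun n => by positivity) (fun n => ?_) h2
    have hn0 : (0 : ℝ) ≤ (n : ℝ) := Nat.cast_nonneg n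
    have h3 : (1 + (n : ℝ) ^ 2) ^ 5 ≤ ((n : ℝ) + 1) ^ 10 := by
      have h : (1 + (n : ℝ) ^ 2) ≤ ((n : ℝ) + 1) ^ 2 := by nlinarith
      calc (1 + (n : ℝ) ^ 2) ^ 5 ≤ (((n : ℝ) + 1) ^ 2) ^ 5 :=
            pow_le_pow_left₀ (by positivity) h 5
        _ = ((n : ℝ) + 1) ^ 10 := by ring
    have h4 : Real.exp (-c * (n : ℝ) ^ 2) ≤ r ^ n := by
      rw [hr, ← Real.exp_nat_mul]
      apply Real.exp_le_exp.2
      have h5 : (n : ℝ) ≤ (n : ℝ) ^ 2 := by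
        have : (n : ℕ) ≤ n ^ 2 := Nat.le_self_pow (by norm_num) n
        exact_mod_cast this
      nlinarith
    exact mul_le_mul h3 h4 (Real.exp_pos _).le (by positivity)
  apply Summable.of_nat_of_neg <;> · apply hnat.congr; intro n; push_cast; ring_nf

lemma mono_bound {x M : ℝ} (n₁ n₂ : ℤ) (hx : 0 ≤ x) (hxM : x ≤ M) (hM : 1 ≤ M)
    (e i j : ℕ) (he : e ≤ 9) (hi : i ≤ 5) (hj : j ≤ 5) :
    x ^ e * ((n₁ : ℝ) ^ 2) ^ i * ((n₂ : ℝ) ^ 2) ^ j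
      ≤ M ^ 9 * (1 + (n₁ : ℝ) ^ 2) ^ 5 * (1 + (n₂ : ℝ) ^ 2) ^ 5 := by
  have h1 : x ^ e ≤ M ^ 9 :=
    (pow_le_pow_left₀ hx hxM e).trans (pow_le_pow_right₀ hM he)
  have h2 : ((n₁ : ℝ) ^ 2) ^ i ≤ (1 + (n₁ : ℝ) ^ 2) ^ 5 :=
    (pow_le_pow_left₀ (sq_nonneg _) (by linarith [sq_nonneg ((n₁ : ℝ))]) i).trans
      (pow_le_pow_right₀ (by nlinarith [sq_nonneg ((n₁ : ℝ))]) hi)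
  have h3 : ((n₂ : ℝ) ^ 2) ^ j ≤ (1 + (n₂ : ℝ) ^ 2) ^ 5 :=
    (pow_le_pow_left₀ (sq_nonneg _) (by linarith [sq_nonneg ((n₂ : ℝ))]) j).trans
      (pow_le_pow_right₀ (by nlinarith [sq_nonneg ((n₂ : ℝ))]) hj)
  exact mul_le_mul (mul_le_mul h1 h2 (by positivity) (by positivity)) h3
    (by positivity) (by positivity)

set_option maxHeartbeats 2000000 in
lemma abs_Dpoly_le {x M : ℝ} (n₁ n₂ : ℤ) (hx : 0 ≤ x) (hxM : x ≤ M) (hM : 1 ≤ M) :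
    |Dpoly x n₁ n₂| ≤ 4000 * (M ^ 9 * (1 + (n₁ : ℝ) ^ 2) ^ 5 * (1 + (n₂ : ℝ) ^ 2) ^ 5) := by
  have H1 := mono_bound n₁ n₂ hx hxM hM 1 1 0 (by norm_num) (by norm_num) (by norm_num)
  have H2 := mono_bound n₁ n₂ hx hxM hM 1 0 1 (by norm_num) (by norm_num) (by norm_num)
  have H3 := mono_bound n₁ n₂ hx hxM hM 3 2 0 (by norm_num) (by norm_num) (by norm_num)
  have H4 := mono_bound n₁ n₂ hx hxM hM 3 1 1 (by norm_num) (by norm_num) (by norm_num)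
  have H5 := mono_bound n₁ n₂ hx hxM hM 5 3 0 (by norm_num) (by norm_num) (by norm_num)
  have H6 := mono_bound n₁ n₂ hx hxM hM 5 2 1 (by norm_num) (by norm_num) (by norm_num)
  have H7 := mono_bound n₁ n₂ hx hxM hM 5 1 2 (by norm_num) (by norm_num) (by norm_num)
  have H8 := mono_bound n₁ n₂ hx hxM hM 7 4 0 (by norm_num) (by norm_num) (by norm_num)
  have H9 := mono_bound n₁ n₂ hx hxM hM 7 3 1 (by norm_num) (by norm_num) (by norm_num)
  have H10 := mono_bound n₁ n₂ hx hxM hM 7 2 2 (by norm_num) (by norm_num) (by norm_num)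
  have H11 := mono_bound n₁ n₂ hx hxM hM 9 4 1 (by norm_num) (by norm_num) (by norm_num)
  have H12 := mono_bound n₁ n₂ hx hxM hM 9 3 2 (by norm_num) (by norm_num) (by norm_num)
  have H13 := mono_bound n₁ n₂ hx hxM hM 9 2 3 (by norm_num) (by norm_num) (by norm_num)
  have N1 : (0:ℝ) ≤ x ^ 1 * ((n₁ : ℝ) ^ 2) ^ 1 * ((n₂ : ℝ) ^ 2) ^ 0 := by positivity
  have N2 : (0:ℝ) ≤ x ^ 1 * ((n₁ : ℝ) ^ 2) ^ 0 * ((n₂ : ℝ) ^ 2) ^ 1 := by positivity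
  have N3 : (0:ℝ) ≤ x ^ 3 * ((n₁ : ℝ) ^ 2) ^ 2 * ((n₂ : ℝ) ^ 2) ^ 0 := by positivity
  have N4 : (0:ℝ) ≤ x ^ 3 * ((n₁ : ℝ) ^ 2) ^ 1 * ((n₂ : ℝ) ^ 2) ^ 1 := by positivity
  have N5 : (0:ℝ) ≤ x ^ 5 * ((n₁ : ℝ) ^ 2) ^ 3 * ((n₂ : ℝ) ^ 2) ^ 0 := by positivity
  have N6 : (0:ℝ) ≤ x ^ 5 * ((n₁ : ℝ) ^ 2) ^ 2 * ((n₂ : ℝ) ^ 2) ^ 1 := by positivity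
  have N7 : (0:ℝ) ≤ x ^ 5 * ((n₁ : ℝ) ^ 2) ^ 1 * ((n₂ : ℝ) ^ 2) ^ 2 := by positivity
  have N8 : (0:ℝ) ≤ x ^ 7 * ((n₁ : ℝ) ^ 2) ^ 4 * ((n₂ : ℝ) ^ 2) ^ 0 := by positivity
  have N9 : (0:ℝ) ≤ x ^ 7 * ((n₁ : ℝ) ^ 2) ^ 3 * ((n₂ : ℝ) ^ 2) ^ 1 := by positivity
  have N10 : (0:ℝ) ≤ x ^ 7 * ((n₁ : ℝ) ^ 2) ^ 2 * ((n₂ : ℝ) ^ 2) ^ 2 := by positivity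
  have N11 : (0:ℝ) ≤ x ^ 9 * ((n₁ : ℝ) ^ 2) ^ 4 * ((n₂ : ℝ) ^ 2) ^ 1 := by positivity
  have N12 : (0:ℝ) ≤ x ^ 9 * ((n₁ : ℝ) ^ 2) ^ 3 * ((n₂ : ℝ) ^ 2) ^ 2 := by positivity
  have N13 : (0:ℝ) ≤ x ^ 9 * ((n₁ : ℝ) ^ 2) ^ 2 * ((n₂ : ℝ) ^ 2) ^ 3 := by positivity
  rw [abs_le]
  constructor <;>
  · simp only [Dpoly, Bpoly, Epoly]
    linarith [H1, H2, H3, H4, H5, H6, H7, H8, H9, H10, H11, H12, H13,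
      N1, N2, N3, N4, N5, N6, N7, N8, N9, N10, N11, N12, N13]

set_option maxHeartbeats 1000000 in
lemma abs_Apoly_le {x M : ℝ} (n₁ n₂ : ℤ) (hx : 0 ≤ x) (hxM : x ≤ M) (hM : 1 ≤ M) :
    |Apoly x n₁ n₂| ≤ 300 * (M ^ 9 * (1 + (n₁ : ℝ) ^ 2) ^ 5 * (1 + (n₂ : ℝ) ^ 2) ^ 5) := by
  have H0 := mono_bound n₁ n₂ hx hxM hM 0 0 0 (by norm_num) (by norm_num) (by norm_num)
  have H1 := mono_bound n₁ n₂ hx hxM hM 2 1 0 (by norm_num) (by norm_num) (by norm_num)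
  have H2 := mono_bound n₁ n₂ hx hxM hM 4 2 0 (by norm_num) (by norm_num) (by norm_num)
  have H3 := mono_bound n₁ n₂ hx hxM hM 4 1 1 (by norm_num) (by norm_num) (by norm_num)
  have H4 := mono_bound n₁ n₂ hx hxM hM 6 3 0 (by norm_num) (by norm_num) (by norm_num)
  have H5 := mono_bound n₁ n₂ hx hxM hM 6 2 1 (by norm_num) (by norm_num) (by norm_num)
  have H6 := mono_bound n₁ n₂ hx hxM hM 8 3 1 (by norm_num) (by norm_num) (by norm_num)
  have H7 := mono_bound n₁ n₂ hx hxM hM 8 2 2 (by norm_num) (by norm_num) (by norm_num)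
  have N1 : (0:ℝ) ≤ x ^ 2 * ((n₁ : ℝ) ^ 2) ^ 1 * ((n₂ : ℝ) ^ 2) ^ 0 := by positivity
  have N2 : (0:ℝ) ≤ x ^ 4 * ((n₁ : ℝ) ^ 2) ^ 2 * ((n₂ : ℝ) ^ 2) ^ 0 := by positivity
  have N3 : (0:ℝ) ≤ x ^ 4 * ((n₁ : ℝ) ^ 2) ^ 1 * ((n₂ : ℝ) ^ 2) ^ 1 := by positivity
  have N4 : (0:ℝ) ≤ x ^ 6 * ((n₁ : ℝ) ^ 2) ^ 3 * ((n₂ : ℝ) ^ 2) ^ 0 := by positivity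
  have N5 : (0:ℝ) ≤ x ^ 6 * ((n₁ : ℝ) ^ 2) ^ 2 * ((n₂ : ℝ) ^ 2) ^ 1 := by positivity
  have N6 : (0:ℝ) ≤ x ^ 8 * ((n₁ : ℝ) ^ 2) ^ 3 * ((n₂ : ℝ) ^ 2) ^ 1 := by positivity
  have N7 : (0:ℝ) ≤ x ^ 8 * ((n₁ : ℝ) ^ 2) ^ 2 * ((n₂ : ℝ) ^ 2) ^ 2 := by positivity
  rw [abs_le]
  constructor <;>
  · simp only [Apoly]
    linarith [H0, H1, H2, H3, H4, H5, H6, H7, N1, N2, N3, N4, N5, N6, N7]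

set_option maxHeartbeats 1000000 in
lemma abs_Epoly_le {x M : ℝ} (n₁ n₂ : ℤ) (hx : 0 ≤ x) (hxM : x ≤ M) (hM : 1 ≤ M) :
    |Epoly x n₁ n₂| ≤ 1000 * (M ^ 9 * (1 + (n₁ : ℝ) ^ 2) ^ 5 * (1 + (n₂ : ℝ) ^ 2) ^ 5) := by
  have H1 := mono_bound n₁ n₂ hx hxM hM 1 1 0 (by norm_num) (by norm_num) (by norm_num)
  have H2 := mono_bound n₁ n₂ hx hxM hM 1 0 1 (by norm_num) (by norm_num) (by norm_num)
  have H3 := mono_bound n₁ n₂ hx hxM hM 5 2 1 (by norm_num) (by norm_num) (by norm_num)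
  have H4 := mono_bound n₁ n₂ hx hxM hM 5 1 2 (by norm_num) (by norm_num) (by norm_num)
  have H5 := mono_bound n₁ n₂ hx hxM hM 9 2 3 (by norm_num) (by norm_num) (by norm_num)
  have H6 := mono_bound n₁ n₂ hx hxM hM 9 3 2 (by norm_num) (by norm_num) (by norm_num)
  have N1 : (0:ℝ) ≤ x ^ 1 * ((n₁ : ℝ) ^ 2) ^ 1 * ((n₂ : ℝ) ^ 2) ^ 0 := by positivity
  have N2 : (0:ℝ) ≤ x ^ 1 * ((n₁ : ℝ) ^ 2) ^ 0 * ((n₂ : ℝ) ^ 2) ^ 1 := by positivity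
  have N3 : (0:ℝ) ≤ x ^ 5 * ((n₁ : ℝ) ^ 2) ^ 2 * ((n₂ : ℝ) ^ 2) ^ 1 := by positivity
  have N4 : (0:ℝ) ≤ x ^ 5 * ((n₁ : ℝ) ^ 2) ^ 1 * ((n₂ : ℝ) ^ 2) ^ 2 := by positivity
  have N5 : (0:ℝ) ≤ x ^ 9 * ((n₁ : ℝ) ^ 2) ^ 2 * ((n₂ : ℝ) ^ 2) ^ 3 := by positivity
  have N6 : (0:ℝ) ≤ x ^ 9 * ((n₁ : ℝ) ^ 2) ^ 3 * ((n₂ : ℝ) ^ 2) ^ 2 := by positivity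
  rw [abs_le]
  constructor <;>
  · simp only [Epoly]
    linarith [H1, H2, H3, H4, H5, H6, N1, N2, N3, N4, N5, N6]

set_option maxHeartbeats 1000000 in
lemma term_hasDerivAt (n₁ n₂ : ℤ) (x : ℝ) :
    HasDerivAt (fun y : ℝ => Real.exp (-2 * y ^ 2 * ((n₁ : ℝ) ^ 2 + (n₂ : ℝ) ^ 2)) * Apoly y n₁ n₂)
      (Real.exp (-2 * x ^ 2 * ((n₁ : ℝ) ^ 2 + (n₂ : ℝ) ^ 2)) * Dpoly x n₁ n₂) x := by
  have hinner : HasDerivAt (fun y : ℝ => -2 * y ^ 2 * ((n₁ : ℝ) ^ 2 + (n₂ : ℝ) ^ 2))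
      (-2 * (2 * x ^ 1) * ((n₁ : ℝ) ^ 2 + (n₂ : ℝ) ^ 2)) x :=
    ((hasDerivAt_pow 2 x).const_mul (-2 : ℝ)).mul_const ((n₁ : ℝ) ^ 2 + (n₂ : ℝ) ^ 2)
  have hexp := hinner.exp
  have hA :=
    (((((((hasDerivAt_const x (1 : ℝ)).sub
      (((hasDerivAt_pow 2 x).const_mul (16 : ℝ)).mul_const ((n₁ : ℝ) ^ 2))).add
      (((hasDerivAt_pow 4 x).const_mul (24 : ℝ)).mul_const ((n₁ : ℝ) ^ 4))).add
      ((((hasDerivAt_pow 4 x).const_mul (24 : ℝ)).mul_const ((n₁ : ℝ) ^ 2)).mul_const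
        ((n₂ : ℝ) ^ 2))).sub
      (((hasDerivAt_pow 6 x).const_mul ((32 : ℝ) / 3)).mul_const ((n₁ : ℝ) ^ 6))).sub
      ((((hasDerivAt_pow 6 x).const_mul (32 : ℝ)).mul_const ((n₁ : ℝ) ^ 4)).mul_const
        ((n₂ : ℝ) ^ 2))).add
      ((((hasDerivAt_pow 8 x).const_mul ((128 : ℝ) / 3)).mul_const ((n₁ : ℝ) ^ 6)).mul_const
        ((n₂ : ℝ) ^ 2))).sub
      ((((hasDerivAt_pow 8 x).const_mul ((128 : ℝ) / 3)).mul_const ((n₁ : ℝ) ^ 4)).mul_const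
        ((n₂ : ℝ) ^ 4))
  refine HasDerivAt.congr_deriv (hexp.mul hA) ?_
  simp only [Dpoly, Bpoly, Epoly, Apoly]
  ring

set_option maxHeartbeats 2000000 in
/-- `F` is differentiable on `(0,∞)` and its derivative there is `q₂`. -/
theorem Fdist_hasDerivAt : ∀ h : ℝ, 0 < h → HasDerivAt Fdist (qTwo h) h := by
  intro h hh
  have hc : (0 : ℝ) < h ^ 2 / 2 := by positivity
  have hM : (1 : ℝ) ≤ h + 2 := by linarith
  have hmem : h ∈ Set.Ioo (h / 2) (h + 1) := ⟨by linarith, by linarith⟩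
  have fsum : Summable fun z : ℤ => (1 + (z : ℝ) ^ 2) ^ 5 * Real.exp (-(h ^ 2 / 2) * (z : ℝ) ^ 2) :=
    sum1 hc
  have hprod : Summable fun n : ℤ × ℤ =>
      ((1 + (n.1 : ℝ) ^ 2) ^ 5 * Real.exp (-(h ^ 2 / 2) * (n.1 : ℝ) ^ 2)) *
      ((1 + (n.2 : ℝ) ^ 2) ^ 5 * Real.exp (-(h ^ 2 / 2) * (n.2 : ℝ) ^ 2)) :=
    fsum.mul_of_nonneg fsum (fun z => by positivity) (fun z => by positivity)
  -- exponential comparison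
  have hexple : ∀ (n : ℤ × ℤ) (y : ℝ), h ^ 2 / 2 ≤ 2 * y ^ 2 →
      Real.exp (-2 * y ^ 2 * ((n.1 : ℝ) ^ 2 + (n.2 : ℝ) ^ 2)) ≤
        Real.exp (-(h ^ 2 / 2) * (n.1 : ℝ) ^ 2) * Real.exp (-(h ^ 2 / 2) * (n.2 : ℝ) ^ 2) := by
    intro n y hy
    rw [← Real.exp_add]
    apply Real.exp_le_exp.2
    nlinarith [mul_nonneg (sub_nonneg.2 hy) (sq_nonneg ((n.1 : ℝ))),
      mul_nonneg (sub_nonneg.2 hy) (sq_nonneg ((n.2 : ℝ)))]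
  have hg : ∀ (n : ℤ × ℤ) (y : ℝ), y ∈ Set.Ioo (h / 2) (h + 1) →
      HasDerivAt (fun z : ℝ => Real.exp (-2 * z ^ 2 * ((n.1 : ℝ) ^ 2 + (n.2 : ℝ) ^ 2)) *
        Apoly z n.1 n.2)
        (Real.exp (-2 * y ^ 2 * ((n.1 : ℝ) ^ 2 + (n.2 : ℝ) ^ 2)) * Dpoly y n.1 n.2) y :=
    fun n y _ => term_hasDerivAt n.1 n.2 y
  have hg' : ∀ (n : ℤ × ℤ) (y : ℝ), y ∈ Set.Ioo (h / 2) (h + 1) →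
      ‖Real.exp (-2 * y ^ 2 * ((n.1 : ℝ) ^ 2 + (n.2 : ℝ) ^ 2)) * Dpoly y n.1 n.2‖ ≤
      4000 * (h + 2) ^ 9 *
        (((1 + (n.1 : ℝ) ^ 2) ^ 5 * Real.exp (-(h ^ 2 / 2) * (n.1 : ℝ) ^ 2)) *
         ((1 + (n.2 : ℝ) ^ 2) ^ 5 * Real.exp (-(h ^ 2 / 2) * (n.2 : ℝ) ^ 2))) := by
    intro n y hy
    have hy0 : (0 : ℝ) ≤ y := by
      have := hy.1
      linarith
    have hyM : y ≤ h + 2 := by linarith [hy.2]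
    have h2y : h ^ 2 / 2 ≤ 2 * y ^ 2 := by nlinarith [hy.1]
    calc ‖Real.exp (-2 * y ^ 2 * ((n.1 : ℝ) ^ 2 + (n.2 : ℝ) ^ 2)) * Dpoly y n.1 n.2‖
        = Real.exp (-2 * y ^ 2 * ((n.1 : ℝ) ^ 2 + (n.2 : ℝ) ^ 2)) * |Dpoly y n.1 n.2| := by
          rw [Real.norm_eq_abs, abs_mul, abs_of_pos (Real.exp_pos _)]
      _ ≤ (Real.exp (-(h ^ 2 / 2) * (n.1 : ℝ) ^ 2) * Real.exp (-(h ^ 2 / 2) * (n.2 : ℝ) ^ 2)) *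
            (4000 * ((h + 2) ^ 9 * (1 + (n.1 : ℝ) ^ 2) ^ 5 * (1 + (n.2 : ℝ) ^ 2) ^ 5)) :=
          mul_le_mul (hexple n y h2y) (abs_Dpoly_le n.1 n.2 hy0 hyM hM) (abs_nonneg _)
            (by positivity)
      _ = 4000 * (h + 2) ^ 9 *
            (((1 + (n.1 : ℝ) ^ 2) ^ 5 * Real.exp (-(h ^ 2 / 2) * (n.1 : ℝ) ^ 2)) *
             ((1 + (n.2 : ℝ) ^ 2) ^ 5 * Real.exp (-(h ^ 2 / 2) * (n.2 : ℝ) ^ 2))) := by ring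
  have h2h : h ^ 2 / 2 ≤ 2 * h ^ 2 := by nlinarith
  have hg0 : Summable fun n : ℤ × ℤ =>
      Real.exp (-2 * h ^ 2 * ((n.1 : ℝ) ^ 2 + (n.2 : ℝ) ^ 2)) * Apoly h n.1 n.2 := by
    refine Summable.of_norm_bounded (hprod.mul_left (300 * (h + 2) ^ 9)) fun n => ?_
    calc ‖Real.exp (-2 * h ^ 2 * ((n.1 : ℝ) ^ 2 + (n.2 : ℝ) ^ 2)) * Apoly h n.1 n.2‖
        = Real.exp (-2 * h ^ 2 * ((n.1 : ℝ) ^ 2 + (n.2 : ℝ) ^ 2)) * |Apoly h n.1 n.2| := by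
          rw [Real.norm_eq_abs, abs_mul, abs_of_pos (Real.exp_pos _)]
      _ ≤ (Real.exp (-(h ^ 2 / 2) * (n.1 : ℝ) ^ 2) * Real.exp (-(h ^ 2 / 2) * (n.2 : ℝ) ^ 2)) *
            (300 * ((h + 2) ^ 9 * (1 + (n.1 : ℝ) ^ 2) ^ 5 * (1 + (n.2 : ℝ) ^ 2) ^ 5)) :=
          mul_le_mul (hexple n h h2h) (abs_Apoly_le n.1 n.2 hh.le (by linarith) hM)
            (abs_nonneg _) (by positivity)
      _ = 300 * (h + 2) ^ 9 *
            (((1 + (n.1 : ℝ) ^ 2) ^ 5 * Real.exp (-(h ^ 2 / 2) * (n.1 : ℝ) ^ 2)) *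
             ((1 + (n.2 : ℝ) ^ 2) ^ 5 * Real.exp (-(h ^ 2 / 2) * (n.2 : ℝ) ^ 2))) := by ring
  have key := hasDerivAt_tsum_of_isPreconnected (hprod.mul_left (4000 * (h + 2) ^ 9))
    isOpen_Ioo isPreconnected_Ioo hg hg' hmem hg0 hmem
  -- summability of the pieces at h
  have hsumD : Summable fun n : ℤ × ℤ =>
      Real.exp (-2 * h ^ 2 * ((n.1 : ℝ) ^ 2 + (n.2 : ℝ) ^ 2)) * Dpoly h n.1 n.2 :=
    Summable.of_norm_bounded (hprod.mul_left (4000 * (h + 2) ^ 9)) fun n => hg' n h hmem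
  have hsumE : Summable fun n : ℤ × ℤ =>
      Real.exp (-2 * h ^ 2 * ((n.1 : ℝ) ^ 2 + (n.2 : ℝ) ^ 2)) * Epoly h n.1 n.2 := by
    refine Summable.of_norm_bounded (hprod.mul_left (1000 * (h + 2) ^ 9)) fun n => ?_
    calc ‖Real.exp (-2 * h ^ 2 * ((n.1 : ℝ) ^ 2 + (n.2 : ℝ) ^ 2)) * Epoly h n.1 n.2‖
        = Real.exp (-2 * h ^ 2 * ((n.1 : ℝ) ^ 2 + (n.2 : ℝ) ^ 2)) * |Epoly h n.1 n.2| := by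
          rw [Real.norm_eq_abs, abs_mul, abs_of_pos (Real.exp_pos _)]
      _ ≤ (Real.exp (-(h ^ 2 / 2) * (n.1 : ℝ) ^ 2) * Real.exp (-(h ^ 2 / 2) * (n.2 : ℝ) ^ 2)) *
            (1000 * ((h + 2) ^ 9 * (1 + (n.1 : ℝ) ^ 2) ^ 5 * (1 + (n.2 : ℝ) ^ 2) ^ 5)) :=
          mul_le_mul (hexple n h h2h) (abs_Epoly_le n.1 n.2 hh.le (by linarith) hM)
            (abs_nonneg _) (by positivity)
      _ = 1000 * (h + 2) ^ 9 *
            (((1 + (n.1 : ℝ) ^ 2) ^ 5 * Real.exp (-(h ^ 2 / 2) * (n.1 : ℝ) ^ 2)) *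
             ((1 + (n.2 : ℝ) ^ 2) ^ 5 * Real.exp (-(h ^ 2 / 2) * (n.2 : ℝ) ^ 2))) := by ring
  have hsumB : Summable fun n : ℤ × ℤ =>
      Real.exp (-2 * h ^ 2 * ((n.1 : ℝ) ^ 2 + (n.2 : ℝ) ^ 2)) * Bpoly h n.1 n.2 := by
    refine (hsumD.sub hsumE).congr fun n => ?_
    simp only [Dpoly]
    ring
  -- the antisymmetric part sums to zero
  have hEzero : (∑' n : ℤ × ℤ,
      Real.exp (-2 * h ^ 2 * ((n.1 : ℝ) ^ 2 + (n.2 : ℝ) ^ 2)) * Epoly h n.1 n.2) = 0 := by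
    set f : ℤ × ℤ → ℝ := fun n =>
      Real.exp (-2 * h ^ 2 * ((n.1 : ℝ) ^ 2 + (n.2 : ℝ) ^ 2)) * Epoly h n.1 n.2 with hf
    have hanti : ∀ n : ℤ × ℤ, f ((Equiv.prodComm ℤ ℤ) n) = - f n := by
      intro n
      simp only [hf, Equiv.prodComm_apply, Prod.fst_swap, Prod.snd_swap]
      rw [show -2 * h ^ 2 * ((n.2 : ℝ) ^ 2 + (n.1 : ℝ) ^ 2)
            = -2 * h ^ 2 * ((n.1 : ℝ) ^ 2 + (n.2 : ℝ) ^ 2) from by ring]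
      simp only [Epoly]
      ring
    have h1 : (∑' n, f n) = ∑' n, f ((Equiv.prodComm ℤ ℤ) n) :=
      ((Equiv.prodComm ℤ ℤ).tsum_eq f).symm
    have h2 : (∑' n, f ((Equiv.prodComm ℤ ℤ) n)) = ∑' n, - f n := tsum_congr fun n => hanti n
    rw [tsum_neg] at h2
    have h3 := h1.trans h2
    linarith
  -- the B part is `qTwo`
  have hBq : (∑' n : ℤ × ℤ,
      Real.exp (-2 * h ^ 2 * ((n.1 : ℝ) ^ 2 + (n.2 : ℝ) ^ 2)) * Bpoly h n.1 n.2) = qTwo h := by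
    have hsupp : Function.support (fun n : ℤ × ℤ =>
        Real.exp (-2 * h ^ 2 * ((n.1 : ℝ) ^ 2 + (n.2 : ℝ) ^ 2)) * Bpoly h n.1 n.2) ⊆
        {p : ℤ × ℤ | p ≠ (0, 0)} := by
      intro p hp
      simp only [Function.mem_support] at hp
      simp only [Set.mem_setOf_eq]
      rintro rfl
      apply hp
      simp [Bpoly]
    exact (tsum_subtype_eq_of_support_subset hsupp).symm
  have hsplit : (∑' n : ℤ × ℤ,
      Real.exp (-2 * h ^ 2 * ((n.1 : ℝ) ^ 2 + (n.2 : ℝ) ^ 2)) * Dpoly h n.1 n.2) = qTwo h := by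
    calc (∑' n : ℤ × ℤ, Real.exp (-2 * h ^ 2 * ((n.1 : ℝ) ^ 2 + (n.2 : ℝ) ^ 2)) * Dpoly h n.1 n.2)
        = ∑' n : ℤ × ℤ,
            (Real.exp (-2 * h ^ 2 * ((n.1 : ℝ) ^ 2 + (n.2 : ℝ) ^ 2)) * Bpoly h n.1 n.2 +
             Real.exp (-2 * h ^ 2 * ((n.1 : ℝ) ^ 2 + (n.2 : ℝ) ^ 2)) * Epoly h n.1 n.2) :=
          tsum_congr fun n => by simp only [Dpoly]; ring
      _ = (∑' n : ℤ × ℤ, Real.exp (-2 * h ^ 2 * ((n.1 : ℝ) ^ 2 + (n.2 : ℝ) ^ 2)) * Bpoly h n.1 n.2)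
          + ∑' n : ℤ × ℤ,
              Real.exp (-2 * h ^ 2 * ((n.1 : ℝ) ^ 2 + (n.2 : ℝ) ^ 2)) * Epoly h n.1 n.2 :=
          Summable.tsum_add hsumB hsumE
      _ = qTwo h := by rw [hEzero, add_zero, hBq]
  rw [← hsplit]
  exact key
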